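/- Let a < 1, γ_0 > 0, and p ∈ (0,1), and define S_a(n,l) by the recursion in the context. For j ≥ 1 set w_j = γ_0 · Γ(j − a) · p^{j − a} / (Γ(1 − a) · j!). Then for every integer n ≥ 0, ∑ over all vectors (m_1, …, m_n) of nonnegative integers with ∑_{j=1}^n j·m_j = n of ∏_{j=1}^{n} w_j^{m_j} / m_j! equals (p^n / n!) · ∑_{l=0}^{n} γ_0^l · p^{−a l} · S_a(n,l). -/

import Mathlib

open Real Finset

/-- The numbers `S_a(n,l)` (generalized Stirling numbers up to the factor `a^{-l}`),
defined by `S_a(0,0) = 1`, `S_a(n,0) = 0` for `n ≥ 1`, `S_a(n,n) = 1`, and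
`S_a(n+1,l) = (n − a·l)·S_a(n,l) + S_a(n,l−1)` for `1 ≤ l ≤ n` (and `S_a(n,l) = 0`
for `l > n`). -/
noncomputable def Sgen (a : ℝ) : ℕ → ℕ → ℝ
  | 0, 0 => 1
  | 0, _ + 1 => 0
  | _ + 1, 0 => 0
  | n + 1, l + 1 => ((n : ℝ) - a * (l + 1)) * Sgen a n (l + 1) + Sgen a n l

open PowerSeries


noncomputable def cseq (a : ℝ) : ℕ → ℝ
  | 0 => 0
  | j + 1 => (∏ i ∈ Finset.range j, ((i : ℝ) + 1 - a)) / (Nat.factorial (j + 1))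

noncomputable def gps (a : ℝ) : ℝ⟦X⟧ := PowerSeries.mk (cseq a)

lemma gps_const (a : ℝ) : constantCoeff (R := ℝ) (gps a) = 0 := by
  rw [← coeff_zero_eq_constantCoeff]
  simp [gps, cseq]

lemma cseq_succ_succ (a : ℝ) (n : ℕ) :
    ((n : ℝ) + 2) * cseq a (n + 2) = ((n : ℝ) + 1 - a) * cseq a (n + 1) := by
  have h2 : ((Nat.factorial (n + 2) : ℝ)) = ((n:ℝ) + 2) * (Nat.factorial (n+1) : ℝ) := by
    rw [Nat.factorial_succ]; push_cast; ring
  have hf : (Nat.factorial (n + 1) : ℝ) ≠ 0 := by positivity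
  have hf2 : (Nat.factorial (n + 2) : ℝ) ≠ 0 := by positivity
  simp only [cseq, Finset.prod_range_succ]
  field_simp
  rw [h2]; ring

lemma gps_ode (a : ℝ) :
    (1 - X) * (PowerSeries.derivative ℝ (gps a)) = 1 - PowerSeries.C (R := ℝ) a * gps a := by
  ext n
  rw [sub_mul, one_mul, map_sub, map_sub]
  rcases n with _ | m
  · simp only [coeff_zero_eq_constantCoeff, map_mul, constantCoeff_X, zero_mul, map_one,
      constantCoeff_C]
    rw [gps_const]
    rw [← coeff_zero_eq_constantCoeff, PowerSeries.coeff_derivative]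
    simp [gps, cseq]
  · rw [coeff_succ_X_mul, PowerSeries.coeff_derivative, PowerSeries.coeff_derivative,
      PowerSeries.coeff_one, PowerSeries.coeff_C_mul]
    simp only [Nat.succ_ne_zero, if_false]
    rcases m with _ | k
    · simp only [gps, coeff_mk]
      simp [cseq]
      ring
    · have := cseq_succ_succ a (k + 1)
      simp only [gps, coeff_mk]
      push_cast
      push_cast at this
      linarith [this]

lemma coeff_X_mul_deriv (ψ : ℝ⟦X⟧) (n : ℕ) :
    PowerSeries.coeff (R := ℝ) n (X * PowerSeries.derivative ℝ ψ) = n * PowerSeries.coeff (R := ℝ) n ψ := by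
  rcases n with _ | m
  · simp [coeff_zero_eq_constantCoeff]
  · rw [coeff_succ_X_mul, PowerSeries.coeff_derivative]
    push_cast; ring

lemma pow_rec (a : ℝ) (l n : ℕ) :
    ((n : ℝ) + 1) * PowerSeries.coeff (R := ℝ) (n + 1) ((gps a) ^ (l + 1)) =
      ((n : ℝ) - a * ((l : ℝ) + 1)) * PowerSeries.coeff (R := ℝ) n ((gps a) ^ (l + 1)) +
        ((l : ℝ) + 1) * PowerSeries.coeff (R := ℝ) n ((gps a) ^ l) := by
  have h1 := gps_ode a
  have hC : ((l + 1 : ℕ) : ℝ⟦X⟧) = PowerSeries.C (R := ℝ) ((l : ℝ) + 1) := by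
    rw [map_add, map_one, map_natCast]; push_cast; ring
  have h2 : (1 - X) * (PowerSeries.derivative ℝ ((gps a) ^ (l + 1))) =
      PowerSeries.C (R := ℝ) ((l : ℝ) + 1) * (gps a) ^ l -
        PowerSeries.C (R := ℝ) ((l : ℝ) + 1) * PowerSeries.C (R := ℝ) a * (gps a) ^ (l + 1) := by
    rw [Derivation.leibniz_pow, Nat.add_sub_cancel, nsmul_eq_mul, smul_eq_mul, hC]
    linear_combination (PowerSeries.C (R := ℝ) ((l : ℝ) + 1)) * (gps a) ^ l * h1
  have h3 := congrArg (PowerSeries.coeff (R := ℝ) n) h2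
  rw [sub_mul, one_mul, map_sub, map_sub, coeff_X_mul_deriv,
    PowerSeries.coeff_derivative, PowerSeries.coeff_C_mul, mul_assoc,
    PowerSeries.coeff_C_mul, PowerSeries.coeff_C_mul] at h3
  push_cast at h3 ⊢
  linarith [h3]

lemma Sgen_coeff (a : ℝ) (n : ℕ) : ∀ l : ℕ,
    Sgen a n l * (Nat.factorial l : ℝ) =
      (Nat.factorial n : ℝ) * PowerSeries.coeff (R := ℝ) n ((gps a) ^ l) := by
  induction n with
  | zero =>
    intro l
    rcases l with _ | l
    · simp [Sgen]
    · rw [coeff_zero_eq_constantCoeff, map_pow, gps_const]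
      simp [Sgen]
  | succ n ih =>
    intro l
    rcases l with _ | l
    · simp [Sgen, PowerSeries.coeff_one]
    · have ih1 := ih (l + 1)
      have ih2 := ih l
      have hrec := pow_rec a l n
      have hF1 : ((Nat.factorial (l + 1) : ℝ)) = ((l : ℝ) + 1) * (Nat.factorial l : ℝ) := by
        rw [Nat.factorial_succ]; push_cast; ring
      have hF2 : ((Nat.factorial (n + 1) : ℝ)) = ((n : ℝ) + 1) * (Nat.factorial n : ℝ) := by
        rw [Nat.factorial_succ]; push_cast; ring
      show (((n : ℝ) - a * ((l : ℕ) + 1)) * Sgen a n (l + 1) + Sgen a n l) * (Nat.factorial (l+1) : ℝ) = _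
      push_cast at ih1 ih2 hrec hF1 hF2 ⊢
      linear_combination ((n : ℝ) - a * ((l : ℝ) + 1)) * ih1 + ((l : ℝ) + 1) * ih2 +
        Sgen a n l * hF1 - PowerSeries.coeff (R := ℝ) (n + 1) ((gps a) ^ (l + 1)) * hF2 -
        (Nat.factorial n : ℝ) * hrec

lemma coeff_pow_zero_of_lt {φ : ℝ⟦X⟧} (hφ : constantCoeff (R := ℝ) φ = 0) {n l : ℕ} (h : n < l) :
    PowerSeries.coeff (R := ℝ) n (φ ^ l) = 0 := by
  have hX : (X : ℝ⟦X⟧) ^ l ∣ φ ^ l := pow_dvd_pow_of_dvd (PowerSeries.X_dvd_iff.mpr hφ) l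
  exact PowerSeries.X_pow_dvd_iff.mp hX n h

lemma coeff_mul_pow_zero_of_lt {φ ψ : ℝ⟦X⟧} (hφ : constantCoeff (R := ℝ) φ = 0)
    (hψ : constantCoeff (R := ℝ) ψ = 0) {n u v : ℕ} (h : n < u + v) :
    PowerSeries.coeff (R := ℝ) n (φ ^ u * ψ ^ v) = 0 := by
  have hX : (X : ℝ⟦X⟧) ^ (u + v) ∣ φ ^ u * ψ ^ v := by
    rw [pow_add]
    exact mul_dvd_mul (pow_dvd_pow_of_dvd (PowerSeries.X_dvd_iff.mpr hφ) u)
      (pow_dvd_pow_of_dvd (PowerSeries.X_dvd_iff.mpr hψ) v)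
  exact PowerSeries.X_pow_dvd_iff.mp hX n h

noncomputable def Eps (φ : ℝ⟦X⟧) : ℝ⟦X⟧ :=
  PowerSeries.mk fun n => ∑ l ∈ Finset.range (n + 1),
    PowerSeries.coeff (R := ℝ) n (φ ^ l) / (Nat.factorial l : ℝ)

lemma coeff_Eps {φ : ℝ⟦X⟧} (hφ : constantCoeff (R := ℝ) φ = 0) {n N : ℕ} (h : n ≤ N) :
    PowerSeries.coeff (R := ℝ) n (Eps φ) =
      ∑ l ∈ Finset.range (N + 1), PowerSeries.coeff (R := ℝ) n (φ ^ l) / (Nat.factorial l : ℝ) := by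
  rw [Eps, coeff_mk]
  apply Finset.sum_subset (Finset.range_subset_range.mpr (by omega))
  intro l _ hl
  rw [Finset.mem_range, not_lt] at hl
  rw [coeff_pow_zero_of_lt hφ (by omega), zero_div]

lemma Eps_zero : Eps 0 = 1 := by
  ext n
  rw [Eps, coeff_mk]
  rcases n with _ | m
  · simp
  · rw [PowerSeries.coeff_one, if_neg (Nat.succ_ne_zero m)]
    apply Finset.sum_eq_zero
    intro l _
    rcases l with _ | l
    · simp [PowerSeries.coeff_one]
    · rw [zero_pow (Nat.succ_ne_zero l)]
      simp

lemma Eps_mul {φ ψ : ℝ⟦X⟧} (hφ : constantCoeff (R := ℝ) φ = 0) (hψ : constantCoeff (R := ℝ) ψ = 0) :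
    Eps (φ + ψ) = Eps φ * Eps ψ := by
  ext n
  have hG : ∀ u v : ℕ, n < u + v →
      PowerSeries.coeff (R := ℝ) n (φ ^ u * ψ ^ v) / ((Nat.factorial u : ℝ) * Nat.factorial v) = 0 :=
    fun u v h => by rw [coeff_mul_pow_zero_of_lt hφ hψ h, zero_div]
  -- RHS
  have hR : PowerSeries.coeff (R := ℝ) n (Eps φ * Eps ψ) =
      ∑ q ∈ Finset.range (n + 1) ×ˢ Finset.range (n + 1),
        PowerSeries.coeff (R := ℝ) n (φ ^ q.1 * ψ ^ q.2) /
          ((Nat.factorial q.1 : ℝ) * Nat.factorial q.2) := by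
    rw [PowerSeries.coeff_mul]
    have step1 : ∀ p ∈ Finset.HasAntidiagonal.antidiagonal n,
        PowerSeries.coeff (R := ℝ) p.1 (Eps φ) * PowerSeries.coeff (R := ℝ) p.2 (Eps ψ) =
        ∑ q ∈ Finset.range (n + 1) ×ˢ Finset.range (n + 1),
          (PowerSeries.coeff (R := ℝ) p.1 (φ ^ q.1) * PowerSeries.coeff (R := ℝ) p.2 (ψ ^ q.2)) /
            ((Nat.factorial q.1 : ℝ) * Nat.factorial q.2) := by
      intro p hp
      rw [Finset.HasAntidiagonal.mem_antidiagonal] at hp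
      rw [coeff_Eps hφ (show p.1 ≤ n by omega), coeff_Eps hψ (show p.2 ≤ n by omega),
        Finset.sum_mul_sum, ← Finset.sum_product']
      apply Finset.sum_congr rfl
      intro q _
      rw [div_mul_div_comm]
    rw [Finset.sum_congr rfl step1, Finset.sum_comm]
    apply Finset.sum_congr rfl
    intro q _
    rw [← Finset.sum_div, ← PowerSeries.coeff_mul]
  rw [hR]
  -- LHS
  have hL : PowerSeries.coeff (R := ℝ) n (Eps (φ + ψ)) =
      ∑ l ∈ Finset.range (n + 1), ∑ q ∈ Finset.HasAntidiagonal.antidiagonal l,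
        PowerSeries.coeff (R := ℝ) n (φ ^ q.1 * ψ ^ q.2) /
          ((Nat.factorial q.1 : ℝ) * Nat.factorial q.2) := by
    rw [Eps, coeff_mk]
    apply Finset.sum_congr rfl
    intro l _
    rw [add_pow, map_sum, Finset.sum_div, Finset.Nat.sum_antidiagonal_eq_sum_range_succ
      (f := fun u v => PowerSeries.coeff (R := ℝ) n (φ ^ u * ψ ^ v) /
        ((Nat.factorial u : ℝ) * Nat.factorial v))]
    apply Finset.sum_congr rfl
    intro u hu
    rw [Finset.mem_range] at hu
    have hul : u ≤ l := by omega
    have hfac : ((l.choose u : ℝ)) * ((Nat.factorial u : ℝ) * (Nat.factorial (l - u) : ℝ)) =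
        (Nat.factorial l : ℝ) := by
      rw [← Nat.cast_mul, ← Nat.cast_mul, ← mul_assoc, Nat.choose_mul_factorial_mul_factorial hul]
    have h1 : (Nat.factorial u : ℝ) ≠ 0 := by positivity
    have h2 : (Nat.factorial (l - u) : ℝ) ≠ 0 := by positivity
    have h3 : (Nat.factorial l : ℝ) ≠ 0 := by positivity
    rw [← map_natCast (PowerSeries.C (R := ℝ)) (l.choose u), PowerSeries.coeff_mul_C]
    rw [div_eq_div_iff h3 (by positivity)]
    linear_combination PowerSeries.coeff (R := ℝ) n (φ ^ u * ψ ^ (l - u)) * hfac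
  rw [hL]
  -- reconcile triangle and square
  have hdisj : (↑(Finset.range (n + 1)) : Set ℕ).PairwiseDisjoint
      (fun l => (Finset.HasAntidiagonal.antidiagonal l : Finset (ℕ × ℕ))) := by
    intro i _ j _ hij
    apply Finset.disjoint_left.mpr
    intro q hq1 hq2
    rw [Finset.HasAntidiagonal.mem_antidiagonal] at hq1 hq2
    omega
  have hset : (Finset.range (n + 1) ×ˢ Finset.range (n + 1)).filter (fun q => q.1 + q.2 ≤ n)
      = (Finset.range (n + 1)).biUnion (fun l => Finset.HasAntidiagonal.antidiagonal l) := by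
    ext q
    simp only [Finset.mem_filter, Finset.mem_product, Finset.mem_biUnion,
      Finset.HasAntidiagonal.mem_antidiagonal, Finset.mem_range]
    constructor
    · rintro ⟨⟨h1, h2⟩, h3⟩
      exact ⟨q.1 + q.2, by omega, rfl⟩
    · rintro ⟨l, hl, rfl⟩
      omega
  rw [← Finset.sum_biUnion hdisj, ← hset]
  have hsq : ∑ q ∈ (Finset.range (n + 1) ×ˢ Finset.range (n + 1)).filter
        (fun q => q.1 + q.2 ≤ n),
        PowerSeries.coeff (R := ℝ) n (φ ^ q.1 * ψ ^ q.2) /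
          ((Nat.factorial q.1 : ℝ) * Nat.factorial q.2)
      = ∑ q ∈ Finset.range (n + 1) ×ˢ Finset.range (n + 1),
        PowerSeries.coeff (R := ℝ) n (φ ^ q.1 * ψ ^ q.2) /
          ((Nat.factorial q.1 : ℝ) * Nat.factorial q.2) := by
    apply Finset.sum_subset (Finset.filter_subset _ _)
    intro q hq1 hq2
    have hgt : ¬ (q.1 + q.2 ≤ n) := fun h => hq2 (Finset.mem_filter.mpr ⟨hq1, h⟩)
    exact hG q.1 q.2 (by omega)
  rw [← hsq]

lemma Eps_sum {ι : Type*} (s : Finset ι) (φ : ι → ℝ⟦X⟧)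
    (h : ∀ k ∈ s, constantCoeff (R := ℝ) (φ k) = 0) :
    Eps (∑ k ∈ s, φ k) = ∏ k ∈ s, Eps (φ k) := by
  classical
  induction s using Finset.cons_induction with
  | empty => simpa using Eps_zero
  | cons i s his ih =>
    rw [Finset.sum_cons, Finset.prod_cons,
      Eps_mul (h i (Finset.mem_cons_self i s)) (by
        rw [map_sum]
        exact Finset.sum_eq_zero fun k hk => h k (Finset.mem_cons_of_mem hk)),
      ih (fun k hk => h k (Finset.mem_cons_of_mem hk))]

lemma coeff_prod_congr {ι : Type*} (s : Finset ι) (A B : ι → ℝ⟦X⟧) (n : ℕ)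
    (h : ∀ k ∈ s, ∀ i ≤ n, PowerSeries.coeff (R := ℝ) i (A k) = PowerSeries.coeff (R := ℝ) i (B k)) :
    ∀ i ≤ n, PowerSeries.coeff (R := ℝ) i (∏ k ∈ s, A k) = PowerSeries.coeff (R := ℝ) i (∏ k ∈ s, B k) := by
  classical
  induction s using Finset.cons_induction with
  | empty => intro i _; simp
  | cons j s hjs ih =>
    intro i hi
    rw [Finset.prod_cons, Finset.prod_cons, PowerSeries.coeff_mul, PowerSeries.coeff_mul]
    apply Finset.sum_congr rfl
    intro p hp
    rw [Finset.HasAntidiagonal.mem_antidiagonal] at hp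
    rw [h j (Finset.mem_cons_self j s) p.1 (by omega),
      ih (fun k hk => h k (Finset.mem_cons_of_mem hk)) p.2 (by omega)]

lemma coeff_pow_congr (A B : ℝ⟦X⟧) (n : ℕ)
    (h : ∀ i ≤ n, PowerSeries.coeff (R := ℝ) i A = PowerSeries.coeff (R := ℝ) i B) (l : ℕ) :
    ∀ i ≤ n, PowerSeries.coeff (R := ℝ) i (A ^ l) = PowerSeries.coeff (R := ℝ) i (B ^ l) := by
  intro i hi
  have := coeff_prod_congr (Finset.range l) (fun _ => A) (fun _ => B) n
    (fun k _ => h) i hi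
  simpa using this

lemma Gamma_prod (a : ℝ) (ha : a < 1) (m : ℕ) :
    Real.Gamma ((m : ℝ) + 1 - a) = (∏ t ∈ Finset.range m, ((t : ℝ) + 1 - a)) * Real.Gamma (1 - a) := by
  induction m with
  | zero => simp
  | succ m ih =>
    have hne : (m : ℝ) + 1 - a ≠ 0 := ne_of_gt (by have h0 : (0:ℝ) ≤ (m:ℝ) := Nat.cast_nonneg m; linarith)
    have : ((m + 1 : ℕ) : ℝ) + 1 - a = ((m : ℝ) + 1 - a) + 1 := by push_cast; ring
    rw [this, Real.Gamma_add_one hne, ih, Finset.prod_range_succ]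
    ring

lemma coeff_CmulXpow (r : ℝ) (e i : ℕ) :
    PowerSeries.coeff (R := ℝ) i (PowerSeries.C (R := ℝ) r * X ^ e) = if i = e then r else 0 := by
  rw [PowerSeries.coeff_C_mul, PowerSeries.coeff_X_pow]
  split_ifs <;> ring

lemma CmulXpow_pow (r : ℝ) (e m : ℕ) :
    (PowerSeries.C (R := ℝ) r * X ^ e) ^ m = PowerSeries.C (R := ℝ) (r ^ m) * X ^ (e * m) := by
  rw [mul_pow, ← map_pow, ← pow_mul]

/-- **Corollary 3 for the generalized negative binomial process**: with Poisson rates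
`w_j = γ₀ Γ(j−a) p^{j−a}/(Γ(1−a) j!)` (equation (3.8)), the sum over all FoF vectors
`(m_1,…,m_n)` with `∑ j·m_j = n` of `∏_j w_j^{m_j}/m_j!` equals
`(p^n/n!) ∑_{l=0}^n γ₀^l p^{−al} S_a(n,l)`. -/
theorem gNBP_FoF_normalization (a γ₀ p : ℝ) (ha : a < 1)
    (hγ : 0 < γ₀) (hp : p ∈ Set.Ioo (0 : ℝ) 1)
    (w : ℕ → ℝ)
    (hw : ∀ j : ℕ, 1 ≤ j →
      w j = γ₀ * Real.Gamma ((j : ℝ) - a) * p ^ ((j : ℝ) - a) /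
        (Real.Gamma (1 - a) * (Nat.factorial j : ℝ)))
    (n : ℕ) :
    ∑ f ∈ (Fintype.piFinset fun _ : Fin n => Finset.range (n + 1)).filter
        (fun f => ∑ k : Fin n, (k.1 + 1) * f k = n),
      ∏ k : Fin n, w (k.1 + 1) ^ (f k) / (Nat.factorial (f k) : ℝ) =
    p ^ n / (Nat.factorial n : ℝ) *
      ∑ l ∈ Finset.range (n + 1), γ₀ ^ l * p ^ (-(a * l)) * Sgen a n l := by
  classical
  have hp0 : (0 : ℝ) < p := hp.1
  have hG0 : Real.Gamma (1 - a) ≠ 0 := ne_of_gt (Real.Gamma_pos_of_pos (by linarith))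
  -- rewrite w in terms of cseq
  have key_w : ∀ i : ℕ, 1 ≤ i → w i = (γ₀ * p ^ (-a)) * (p ^ i * cseq a i) := by
    intro i hi
    obtain ⟨m, rfl⟩ : ∃ m, i = m + 1 := ⟨i - 1, by omega⟩
    rw [hw (m + 1) hi]
    have h1 : ((m + 1 : ℕ) : ℝ) - a = (m : ℝ) + 1 - a := by push_cast; ring
    have h2 : p ^ (((m + 1 : ℕ) : ℝ) - a) = p ^ (m + 1 : ℕ) * p ^ (-a) := by
      rw [show (((m + 1 : ℕ) : ℝ) - a) = ((m + 1 : ℕ) : ℝ) + (-a) by ring,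
        Real.rpow_add hp0, Real.rpow_natCast]
    rw [h2, h1, Gamma_prod a ha m]
    have hf : (Nat.factorial (m + 1) : ℝ) ≠ 0 := by positivity
    simp only [cseq]
    field_simp
  -- the factors
  set T : Fin n → ℝ⟦X⟧ := fun k => ∑ m ∈ Finset.range (n + 1),
    PowerSeries.C (R := ℝ) (w (k.1 + 1) ^ m / (Nat.factorial m : ℝ)) * X ^ ((k.1 + 1) * m) with hT
  set φf : Fin n → ℝ⟦X⟧ := fun k => PowerSeries.C (R := ℝ) (w (k.1 + 1)) * X ^ (k.1 + 1) with hφf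
  have hφconst : ∀ k : Fin n, constantCoeff (R := ℝ) (φf k) = 0 := by
    intro k
    simp [hφf, constantCoeff_X, zero_pow (Nat.succ_ne_zero k.1)]
  set V : ℝ⟦X⟧ := PowerSeries.C (R := ℝ) (γ₀ * p ^ (-a)) * PowerSeries.rescale p (gps a) with hV
  -- Step A : LHS = coeff n (∏ T)
  have hA : ∑ f ∈ (Fintype.piFinset fun _ : Fin n => Finset.range (n + 1)).filter
        (fun f => ∑ k : Fin n, (k.1 + 1) * f k = n),
      ∏ k : Fin n, w (k.1 + 1) ^ (f k) / (Nat.factorial (f k) : ℝ)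
      = PowerSeries.coeff (R := ℝ) n (∏ k : Fin n, T k) := by
    rw [hT, Finset.prod_univ_sum, map_sum, Finset.sum_filter]
    apply Finset.sum_congr rfl
    intro f _
    rw [Finset.prod_mul_distrib, ← map_prod, Finset.prod_pow_eq_pow_sum,
      PowerSeries.coeff_C_mul, PowerSeries.coeff_X_pow]
    by_cases hc : ∑ k : Fin n, (k.1 + 1) * f k = n
    · rw [if_pos hc, if_pos hc.symm, mul_one]
    · rw [if_neg hc, if_neg fun h => hc h.symm, mul_zero]
  -- Step B : T k agrees with Eps (φf k) up to degree n
  have hB : ∀ k : Fin n, ∀ i ≤ n,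
      PowerSeries.coeff (R := ℝ) i (T k) = PowerSeries.coeff (R := ℝ) i (Eps (φf k)) := by
    intro k i hi
    rw [coeff_Eps (hφconst k) hi]
    simp only [hT, hφf]
    rw [map_sum]
    apply Finset.sum_congr rfl
    intro m _
    rw [CmulXpow_pow, coeff_CmulXpow, coeff_CmulXpow]
    split_ifs <;> simp
  -- Step D : W agrees with V up to degree n
  have hWV : ∀ i ≤ n, PowerSeries.coeff (R := ℝ) i (∑ k : Fin n, φf k) = PowerSeries.coeff (R := ℝ) i V := by
    intro i hi
    rw [map_sum, hV, PowerSeries.coeff_C_mul, PowerSeries.coeff_rescale]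
    have hterm : ∀ k : Fin n, PowerSeries.coeff (R := ℝ) i (φf k)
        = w (k.1 + 1) * (if i = k.1 + 1 then 1 else 0) := by
      intro k
      simp only [hφf]
      rw [PowerSeries.coeff_C_mul, PowerSeries.coeff_X_pow]
    rcases i with _ | m
    · rw [Finset.sum_congr rfl fun k _ => hterm k,
        Finset.sum_eq_zero fun k _ => by
          rw [if_neg (by omega : ¬(0 = k.1 + 1)), mul_zero]]
      have hg0 : PowerSeries.coeff (R := ℝ) 0 (gps a) = 0 := by
        rw [coeff_zero_eq_constantCoeff]; exact gps_const a
      rw [hg0]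
      ring
    · have hm : m < n := by omega
      rw [Finset.sum_congr rfl fun k _ => hterm k,
        Finset.sum_eq_single (⟨m, hm⟩ : Fin n)]
      · rw [if_pos rfl, mul_one, key_w (m + 1) (by omega)]
        simp only [gps, coeff_mk]
      · intro k _ hk
        rw [if_neg, mul_zero]
        intro hc
        apply hk
        apply Fin.ext
        have hval : (⟨m, hm⟩ : Fin n).1 = m := rfl
        omega
      · intro h
        exact absurd (Finset.mem_univ _) h
  -- chain
  rw [hA, coeff_prod_congr Finset.univ T (fun k => Eps (φf k)) n (fun k _ => hB k) n le_rfl,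
    ← Eps_sum Finset.univ φf (fun k _ => hφconst k), Eps, coeff_mk]
  rw [Finset.mul_sum]
  apply Finset.sum_congr rfl
  intro l _
  rw [coeff_pow_congr _ _ n hWV l n le_rfl, hV, mul_pow, ← map_pow, ← map_pow,
    PowerSeries.coeff_C_mul, PowerSeries.coeff_rescale]
  have hS := Sgen_coeff a n l
  have hfn : (Nat.factorial n : ℝ) ≠ 0 := by positivity
  have hfl : (Nat.factorial l : ℝ) ≠ 0 := by positivity
  have hpal : (p ^ (-a) : ℝ) ^ l = p ^ (-(a * l)) := by
    rw [← Real.rpow_natCast (p ^ (-a)) l, ← Real.rpow_mul hp0.le,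
      show (-a) * (l : ℝ) = -(a * (l : ℝ)) by ring]
  rw [mul_pow, hpal]
  field_simp
  linear_combination (-1 : ℝ) * hS
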